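/- Let O be a complete discrete valuation ring with uniformizer π and C^• a complex of flat, separated, π-adically complete O-modules. Let ξ_1,…,ξ_N ∈ C^i satisfy ∂(ξ_j) = 0 for all j, and suppose the cohomology classes [ξ̄_1],…,[ξ̄_N] span H^i(C̄^•) over the residue field. Then the classes [ξ_1],…,[ξ_N] span H^i(C^•) over O. -/

import Mathlib

/-- Membership in `span {π} ^ m • ⊤` is divisibility by `π ^ m`. -/
lemma stmt6_aux {O : Type} [CommRing O] (π : O) {M : Type} [AddCommGroup M] [Module O M]
    (x : M) (m : ℕ) :
    x ∈ (Ideal.span {π} ^ m • ⊤ : Submodule O M) ↔ ∃ y, x = π ^ m • y := by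
  constructor
  · intro h
    rw [Ideal.span_singleton_pow] at h
    refine Submodule.smul_induction_on h ?_ ?_
    · rintro r hr n -
      obtain ⟨a, rfl⟩ := Ideal.mem_span_singleton'.mp hr
      exact ⟨a • n, by rw [mul_comm, mul_smul]⟩
    · rintro x y ⟨u, rfl⟩ ⟨v, rfl⟩
      exact ⟨u + v, (smul_add _ _ _).symm⟩
  · rintro ⟨y, rfl⟩
    exact Submodule.smul_mem_smul
      (by rw [Ideal.span_singleton_pow]; exact Ideal.mem_span_singleton_self _)
      Submodule.mem_top

/-- Partial sums of `∑ π^k • g k` form a Cauchy sequence. -/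
lemma stmt6_cauchy {O : Type} [CommRing O] (π : O) {M : Type} [AddCommGroup M] [Module O M]
    (g : ℕ → M) {m n : ℕ} (h : m ≤ n) :
    ∃ y, (∑ k ∈ Finset.range n, π ^ k • g k) - (∑ k ∈ Finset.range m, π ^ k • g k)
      = π ^ m • y := by
  refine ⟨∑ k ∈ Finset.Ico m n, π ^ (k - m) • g k, ?_⟩
  rw [← Finset.sum_Ico_eq_sub _ h, Finset.smul_sum]
  refine Finset.sum_congr rfl fun k hk => ?_
  rw [smul_smul, ← pow_add, Nat.add_sub_cancel' (Finset.mem_Ico.mp hk).1]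

/-- Let `O` be a complete discrete valuation ring with uniformizer `π`, and `(C^•, d)` a
cochain complex of flat, separated, π-adically complete `O`-modules.  Let
`ξ_1, …, ξ_N ∈ C^{i+1}` be cocycles whose reductions mod π span `H^{i+1}(C̄^•)` over the
residue field (i.e. every `ω ∈ C^{i+1}` with `dω ∈ πC^{i+2}` can be written as an
`O`-linear combination of the `ξ_j` plus a coboundary plus an element of `πC^{i+1}`).
Then the classes `[ξ_1], …, [ξ_N]` span `H^{i+1}(C^•)` over `O`: every cocycle in
`C^{i+1}` is an `O`-linear combination of the `ξ_j` plus a coboundary. -/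
theorem stmt6
    (O : Type) [CommRing O] [IsDomain O] [IsDiscreteValuationRing O]
    (π : O) (hπ : Irreducible π)
    [IsAdicComplete (Ideal.span {π}) O]
    (C : ℤ → Type) [∀ i, AddCommGroup (C i)] [∀ i, Module O (C i)]
    (d : ∀ i, C i →ₗ[O] C (i + 1))
    (hdd : ∀ i (x : C i), d (i + 1) (d i x) = 0)
    (hflat : ∀ i (x : C i), π • x = 0 → x = 0)
    [∀ i, IsAdicComplete (Ideal.span {π}) (C i)]
    (i : ℤ) (N : ℕ) (ξ : Fin N → C (i + 1))
    (hξ : ∀ j, d (i + 1) (ξ j) = 0)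
    (hspan : ∀ ω : C (i + 1), (∃ z, d (i + 1) ω = π • z) →
      ∃ (c : Fin N → O) (η : C i) (ζ : C (i + 1)),
        ω = ∑ j, c j • ξ j + d i η + π • ζ) :
    ∀ ω : C (i + 1), d (i + 1) ω = 0 →
      ∃ (c : Fin N → O) (η : C i), ω = ∑ j, c j • ξ j + d i η := by
  intro ω hω
  -- step: a cocycle is a combination plus `π` times a cocycle
  have key : ∀ w : C (i + 1), d (i + 1) w = 0 →
      ∃ (c : Fin N → O) (η : C i) (w' : C (i + 1)),
        d (i + 1) w' = 0 ∧ w = ∑ j, c j • ξ j + d i η + π • w' := by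
    intro w hw
    obtain ⟨c, η, ζ, h⟩ := hspan w ⟨0, by rw [hw]; simp⟩
    have hsum : d (i + 1) (∑ j, c j • ξ j) = 0 := by
      simp [map_sum, map_smul, hξ]
    have hcong := congrArg (d (i + 1)) h
    rw [hw, map_add, map_add, hsum, hdd, map_smul, zero_add, zero_add] at hcong
    exact ⟨c, η, ζ, hflat _ _ hcong.symm, h⟩
  choose fc fη fw hfd hfe using key
  -- the successive approximation sequence
  let W : ℕ → {w : C (i + 1) // d (i + 1) w = 0} := fun n =>
    Nat.rec ⟨ω, hω⟩ (fun _ p => ⟨fw p.1 p.2, hfd p.1 p.2⟩) n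
  set cs : ℕ → Fin N → O := fun n => fc (W n).1 (W n).2 with hcs
  set es : ℕ → C i := fun n => fη (W n).1 (W n).2 with hes
  have hstep : ∀ n, (W n).1 = ∑ j, cs n j • ξ j + d i (es n) + π • (W (n + 1)).1 :=
    fun n => hfe (W n).1 (W n).2
  have main : ∀ n : ℕ, ω = (∑ j, (∑ k ∈ Finset.range n, π ^ k • cs k j) • ξ j)
      + d i (∑ k ∈ Finset.range n, π ^ k • es k) + π ^ n • (W n).1 := by
    intro n
    induction n with
    | zero => simp [W]
    | succ n ih =>
      rw [ih, hstep n]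
      simp only [Finset.sum_range_succ, add_smul, Finset.sum_add_distrib, map_add,
        smul_add, map_smul, smul_smul, Finset.smul_sum, pow_succ, smul_eq_mul]
      abel
  -- limits of the coefficient and coboundary partial sums
  have hSlim : ∀ j, ∃ L : O, ∀ n, (∑ k ∈ Finset.range n, π ^ k • cs k j) ≡ L
      [SMOD (Ideal.span {π} ^ n • ⊤ : Submodule O O)] := by
    intro j
    refine IsPrecomplete.prec inferInstance ?_
    intro m n hmn
    rw [SModEq.sub_mem]
    obtain ⟨y, hy⟩ := stmt6_cauchy π (fun k => cs k j) hmn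
    exact (stmt6_aux π _ m).mpr ⟨-y, by rw [smul_neg, ← hy]; abel⟩
  choose Lc hLc using hSlim
  obtain ⟨H, hH⟩ : ∃ L : C i, ∀ n, (∑ k ∈ Finset.range n, π ^ k • es k) ≡ L
      [SMOD (Ideal.span {π} ^ n • ⊤ : Submodule O (C i))] := by
    refine IsPrecomplete.prec inferInstance ?_
    intro m n hmn
    rw [SModEq.sub_mem]
    obtain ⟨y, hy⟩ := stmt6_cauchy π es hmn
    exact (stmt6_aux π _ m).mpr ⟨-y, by rw [smul_neg, ← hy]; abel⟩
  refine ⟨Lc, H, ?_⟩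
  rw [← sub_eq_zero]
  refine IsHausdorff.haus (inferInstance : IsHausdorff (Ideal.span {π}) (C (i + 1)))
    _ (fun n => ?_)
  rw [SModEq.zero]
  -- express the difference as a multiple of π^n
  obtain ⟨a, ha⟩ : ∃ a : Fin N → O, ∀ j,
      (∑ k ∈ Finset.range n, π ^ k • cs k j) - Lc j = π ^ n • a j := by
    have := fun j => (stmt6_aux π _ n).mp ((SModEq.sub_mem).mp (hLc j n))
    choose a ha using this
    exact ⟨a, ha⟩
  obtain ⟨b, hb⟩ := (stmt6_aux π _ n).mp ((SModEq.sub_mem).mp (hH n))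
  refine (stmt6_aux π _ n).mpr ⟨(∑ j, a j • ξ j) + d i b + (W n).1, ?_⟩
  have hS' : ∀ j, (∑ k ∈ Finset.range n, π ^ k • cs k j) = Lc j + π ^ n • a j :=
    fun j => by rw [← ha j]; abel
  have hH' : (∑ k ∈ Finset.range n, π ^ k • es k) = H + π ^ n • b := by
    rw [← hb]; abel
  rw [main n]
  simp only [smul_eq_mul] at hS'
  simp only [hS', hH', add_smul, Finset.sum_add_distrib, map_add, map_smul, smul_add,
    smul_smul, smul_eq_mul, Finset.smul_sum]
  abel
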